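/- For every fair division instance with n agents, m goods, and monotone normalized valuations, there exists an allocation with copies (A_1,…,A_n) such that v_i(A_i) ≥ μ_i^n(M) for every agent i and the total number of copies Σ_i |A_i| − |⋃_i A_i| is at most ((n−1)/n)^n · m. -/

import Mathlib

open Finset

/-- The `d`-maximin share of valuation `v` over the set `S` of goods:
the maximum over partitions of `S` into `d` bundles of the minimum bundle value. -/
noncomputable def mms {G : Type*} (v : Finset G → ℝ) (d : ℕ) (S : Finset G) : ℝ :=
  ⨆ P : G → Fin d, ⨅ j : Fin d, v (S.filter fun g => P g = j)

lemma card_subtype_ne' {n : ℕ} (i : Fin n) :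
    Fintype.card {a : Fin n // ¬ a = i} = n - 1 := by
  rw [Fintype.card_subtype_compl, Fintype.card_subtype_eq, Fintype.card_fin]

lemma count_eval {n : ℕ} (i k : Fin n) :
    (Finset.univ.filter fun c : Fin n → Fin n => k = c i).card = n ^ (n - 1) := by
  classical
  have e : {c : Fin n → Fin n // k = c i} ≃ ({a : Fin n // ¬ a = i} → Fin n) :=
    { toFun := fun c a => c.1 a.1
      invFun := fun f => ⟨fun a => if h : a = i then k else f ⟨a, h⟩, by simp⟩
      left_inv := by
        rintro ⟨c, hc⟩
        apply Subtype.ext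
        funext a
        dsimp only
        split_ifs with h
        · subst h; exact hc
        · rfl
      right_inv := by
        intro f
        funext a
        dsimp only
        rw [dif_neg a.2] }
  calc (Finset.univ.filter fun c : Fin n → Fin n => k = c i).card
      = Fintype.card {c : Fin n → Fin n // k = c i} := (Fintype.card_subtype _).symm
    _ = Fintype.card ({a : Fin n // ¬ a = i} → Fin n) := Fintype.card_congr e
    _ = n ^ (n - 1) := by
        rw [Fintype.card_fun, Fintype.card_fin, card_subtype_ne']

lemma count_avoid {n : ℕ} (q : Fin n → Fin n) :
    (Finset.univ.filter fun c : Fin n → Fin n => ∀ i, ¬ q i = c i).card = (n - 1) ^ n := by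
  classical
  have e : {c : Fin n → Fin n // ∀ i, ¬ q i = c i} ≃ (∀ i : Fin n, {b : Fin n // ¬ q i = b}) :=
    Equiv.subtypePiEquivPi (p := fun (i : Fin n) (b : Fin n) => ¬ q i = b)
  calc (Finset.univ.filter fun c : Fin n → Fin n => ∀ i, ¬ q i = c i).card
      = Fintype.card {c : Fin n → Fin n // ∀ i, ¬ q i = c i} := (Fintype.card_subtype _).symm
    _ = Fintype.card (∀ i : Fin n, {b : Fin n // ¬ q i = b}) := Fintype.card_congr e
    _ = (n - 1) ^ n := by
        rw [Fintype.card_pi]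
        have h : ∀ i : Fin n, Fintype.card {b : Fin n // ¬ q i = b} = n - 1 := by
          intro i
          rw [Fintype.card_subtype_compl, Fintype.card_fin, Fintype.card_subtype_eq' (q i)]
        rw [Finset.prod_congr rfl fun i _ => h i, Finset.prod_const, Finset.card_univ,
          Fintype.card_fin]

/-- For every instance with `n` agents, `m` goods and monotone normalized
valuations, there is an allocation with copies giving each agent her MMS, whose total
number of copies is at most `((n-1)/n)^n * m`. -/
theorem stmt1 {G : Type*} [Fintype G] [DecidableEq G] (n : ℕ) (hn : 0 < n)
    (v : Fin n → Finset G → ℝ)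
    (hnorm : ∀ i, v i ∅ = 0)
    (hnonneg : ∀ i S, 0 ≤ v i S)
    (hmono : ∀ i S T, S ⊆ T → v i S ≤ v i T) :
    ∃ A : Fin n → Finset G,
      (∀ i, mms (v i) n Finset.univ ≤ v i (A i)) ∧
      ((∑ i, ((A i).card : ℝ)) - ((Finset.univ.biUnion A).card : ℝ) ≤
        (((n : ℝ) - 1) / n) ^ n * Fintype.card G) := by
  classical
  haveI : Nonempty (Fin n) := ⟨⟨0, hn⟩⟩
  have hn0 : (n : ℝ) ≠ 0 := Nat.cast_ne_zero.2 hn.ne'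
  set m := Fintype.card G with hm
  -- Step 1: optimal partitions
  have hP : ∀ i : Fin n, ∃ P : G → Fin n, ∀ j : Fin n,
      mms (v i) n Finset.univ ≤ v i (Finset.univ.filter fun g => P g = j) := by
    intro i
    obtain ⟨P, hPmax⟩ := Finite.exists_max (fun P : G → Fin n =>
      ⨅ j : Fin n, v i (Finset.univ.filter fun g => P g = j))
    refine ⟨P, fun j => ?_⟩
    have h1 : mms (v i) n Finset.univ ≤
        ⨅ j : Fin n, v i (Finset.univ.filter fun g => P g = j) := ciSup_le hPmax
    exact h1.trans (ciInf_le (Finite.bddBelow_range _) j)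
  choose P hPval using hP
  -- allocations parameterized by a choice of bundle index for each agent
  set A : (Fin n → Fin n) → Fin n → Finset G :=
    fun c i => Finset.univ.filter fun g => P i g = c i with hA
  -- Sum over all choices of total bundle sizes
  have S1 : ∑ c : Fin n → Fin n, ∑ i : Fin n, (A c i).card = m * n ^ n := by
    rw [Finset.sum_comm]
    have hi : ∀ i : Fin n, ∑ c : Fin n → Fin n, (A c i).card = m * n ^ (n - 1) := by
      intro i
      have hcf : ∀ c : Fin n → Fin n, (A c i).card =
          ∑ g : G, if P i g = c i then 1 else 0 := by
        intro c
        simp only [hA]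
        exact Finset.card_filter _ _
      rw [Finset.sum_congr rfl fun c _ => hcf c, Finset.sum_comm]
      have hg : ∀ g : G, (∑ c : Fin n → Fin n, if P i g = c i then 1 else 0) =
          n ^ (n - 1) := by
        intro g
        rw [← Finset.card_filter]
        exact count_eval i (P i g)
      rw [Finset.sum_congr rfl fun g _ => hg g, Finset.sum_const, Finset.card_univ, ← hm,
        smul_eq_mul]
    rw [Finset.sum_congr rfl fun i _ => hi i, Finset.sum_const, Finset.card_univ,
      Fintype.card_fin, smul_eq_mul]
    have h2 : n * (m * n ^ (n - 1)) = m * (n ^ (n - 1) * n) := by ring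
    rw [h2, ← pow_succ, Nat.sub_add_cancel hn]
  -- Sum over all choices of union sizes
  have hbi : ∀ c : Fin n → Fin n, Finset.univ.biUnion (A c) =
      Finset.univ.filter fun g => ∃ i, P i g = c i := by
    intro c
    ext g
    simp [hA]
  have hpow_le : (n - 1) ^ n ≤ n ^ n := Nat.pow_le_pow_left (Nat.sub_le n 1) n
  have S2 : ∑ c : Fin n → Fin n, (Finset.univ.biUnion (A c)).card =
      m * (n ^ n - (n - 1) ^ n) := by
    have h1 : ∀ c : Fin n → Fin n, (Finset.univ.biUnion (A c)).card =
        ∑ g : G, if ∃ i, P i g = c i then 1 else 0 := by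
      intro c
      rw [hbi c]
      exact Finset.card_filter _ _
    rw [Finset.sum_congr rfl fun c _ => h1 c, Finset.sum_comm]
    have hg : ∀ g : G, (∑ c : Fin n → Fin n, if ∃ i, P i g = c i then 1 else 0) =
        n ^ n - (n - 1) ^ n := by
      intro g
      rw [← Finset.card_filter]
      have hsplit := Finset.card_filter_add_card_filter_not
        (s := (Finset.univ : Finset (Fin n → Fin n)))
        (fun c : Fin n → Fin n => ∃ i, P i g = c i)
      have hfc : (Finset.univ.filter fun c : Fin n → Fin n => ¬ ∃ i, P i g = c i) =
          Finset.univ.filter fun c : Fin n → Fin n => ∀ i, ¬ P i g = c i := by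
        apply Finset.filter_congr
        intro c _
        exact not_exists
      have hneg : (Finset.univ.filter fun c : Fin n → Fin n =>
          ¬ ∃ i, P i g = c i).card = (n - 1) ^ n := by
        rw [hfc]
        exact count_avoid (fun i => P i g)
      have hcard : (Finset.univ : Finset (Fin n → Fin n)).card = n ^ n := by
        rw [Finset.card_univ, Fintype.card_fun, Fintype.card_fin]
      rw [hneg, hcard] at hsplit
      exact Nat.eq_sub_of_add_eq hsplit
    rw [Finset.sum_congr rfl fun g _ => hg g, Finset.sum_const, Finset.card_univ, ← hm,
      smul_eq_mul]
  -- averaging over all choices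
  set B : ℝ := (((n : ℝ) - 1) / n) ^ n * m with hB
  have hsum_le : ∑ c : Fin n → Fin n,
      ((∑ i, ((A c i).card : ℝ)) - ((Finset.univ.biUnion (A c)).card : ℝ)) ≤
      ∑ _c : Fin n → Fin n, B := by
    rw [Finset.sum_sub_distrib]
    have e1 : ∑ c : Fin n → Fin n, ∑ i : Fin n, ((A c i).card : ℝ) =
        ((m * n ^ n : ℕ) : ℝ) := by
      exact_mod_cast congrArg (Nat.cast : ℕ → ℝ) S1
    have e2 : ∑ c : Fin n → Fin n, ((Finset.univ.biUnion (A c)).card : ℝ) =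
        ((m * (n ^ n - (n - 1) ^ n) : ℕ) : ℝ) := by
      exact_mod_cast congrArg (Nat.cast : ℕ → ℝ) S2
    have e3 : ∑ _c : Fin n → Fin n, B = ((n : ℝ)) ^ n * B := by
      rw [Finset.sum_const, Finset.card_univ, Fintype.card_fun, Fintype.card_fin,
        nsmul_eq_mul]
      push_cast
      ring
    have lhs_eq : ((m * n ^ n : ℕ) : ℝ) - ((m * (n ^ n - (n - 1) ^ n) : ℕ) : ℝ) =
        (m : ℝ) * ((n - 1 : ℕ) : ℝ) ^ n := by
      rw [Nat.cast_mul, Nat.cast_mul, Nat.cast_sub hpow_le]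
      push_cast
      ring
    have rhs_eq : ((n : ℝ)) ^ n * B = (m : ℝ) * ((n - 1 : ℕ) : ℝ) ^ n := by
      have hcast : ((n : ℝ) - 1) = ((n - 1 : ℕ) : ℝ) := by
        rw [Nat.cast_sub hn]
        simp
      rw [hB, hcast, div_pow]
      field_simp
    rw [e1, e2, e3, lhs_eq, rhs_eq]
  obtain ⟨c, -, hc⟩ := Finset.exists_le_of_sum_le Finset.univ_nonempty hsum_le
  refine ⟨A c, fun i => ?_, ?_⟩
  · simpa only [hA] using hPval i (c i)
  · exact hc
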